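/- Let A be a finite abelian group of order v, let D ⊆ A be a (v,k,λ)-difference set with k > λ, and let s, g ∈ A. Then the following exact identity, expressing the final amplitude of the shifted-difference-set quantum algorithm, holds: (1 − 2k/v) − (2/(v·√(k−λ)))·∑_{χ ≠ χ₀} χ(s)·|χ(D)|²·conj(χ(g)) = 1 − 2(k − √(k−λ))/v − 2√(k−λ)·[g = s], where the sum is over all nontrivial characters χ of A, χ(D) := ∑_{d∈D} χ(d), conj denotes complex conjugation, and [g = s] is 1 if g = s and 0 otherwise. -/

import Mathlib

open scoped Classical

/-- Exact amplitude identity of the shifted-difference-set quantum algorithm: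
for a `(v,k,λ)`-difference set `D` (with `k > λ`) in a finite abelian group `A`
and any `s, g ∈ A`,
`(1 − 2k/v) − (2/(v√(k−λ)))·∑_{χ ≠ χ₀} χ(s)·|χ(D)|²·conj(χ(g))
  = 1 − 2(k − √(k−λ))/v − 2√(k−λ)·[g = s]`. -/
theorem shifted_difference_set_amplitude
    {A : Type*} [AddCommGroup A] [Fintype A] [DecidableEq A]
    (v k l : ℕ) (hv : Fintype.card A = v)
    (D : Finset A) (hk : D.card = k) (hl : 1 ≤ l) (hkl : l < k)
    (hD : ∀ a : A, a ≠ 0 →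
      ((D ×ˢ D).filter (fun p => p.1 - p.2 = a)).card = l)
    (s g : A) :
    ((1 : ℂ) - 2 * (k : ℂ) / (v : ℂ))
      - (2 / ((v : ℂ) * (Real.sqrt ((k : ℝ) - (l : ℝ)) : ℂ)))
        * ∑ χ ∈ Finset.univ.filter (fun χ : AddChar A ℂ => χ ≠ 1),
            χ s * ((‖∑ d ∈ D, χ d‖ : ℝ) : ℂ) ^ 2 * (starRingEnd ℂ) (χ g)
      = 1 - 2 * ((k : ℂ) - (Real.sqrt ((k : ℝ) - (l : ℝ)) : ℂ)) / (v : ℂ)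
        - 2 * (Real.sqrt ((k : ℝ) - (l : ℝ)) : ℂ) * (if g = s then 1 else 0) := by
  have hv0 : (v : ℂ) ≠ 0 := by
    have : 0 < v := hv ▸ Fintype.card_pos
    exact_mod_cast this.ne'
  set r : ℝ := Real.sqrt ((k : ℝ) - (l : ℝ)) with hr
  have hkl' : (0 : ℝ) ≤ (k : ℝ) - (l : ℝ) := by
    have : (l : ℝ) ≤ k := by exact_mod_cast hkl.le
    linarith
  have hr2 : ((r : ℂ)) ^ 2 = (k : ℂ) - (l : ℂ) := by
    have h : r ^ 2 = (k : ℝ) - (l : ℝ) := Real.sq_sqrt hkl'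
    calc ((r : ℂ)) ^ 2 = ((r ^ 2 : ℝ) : ℂ) := by push_cast; ring
      _ = (k : ℂ) - (l : ℂ) := by rw [h]; push_cast; ring
  have hr0 : (r : ℂ) ≠ 0 := by
    have : (0:ℝ) < r := Real.sqrt_pos.2 (by
      have : (l : ℝ) < k := by exact_mod_cast hkl
      linarith)
    exact_mod_cast this.ne'
  -- diagonal count
  have hc0 : ((D ×ˢ D).filter (fun p => p.1 - p.2 = 0)).card = k := by
    have himg : (D ×ˢ D).filter (fun p => p.1 - p.2 = 0) = D.image (fun d => (d, d)) := by
      ext ⟨a, b⟩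
      simp only [Finset.mem_filter, Finset.mem_product, Finset.mem_image, sub_eq_zero,
        Prod.mk.injEq]
      constructor
      · rintro ⟨⟨ha, hb⟩, rfl⟩; exact ⟨a, ha, rfl, rfl⟩
      · rintro ⟨d, hd, rfl, rfl⟩; exact ⟨⟨hd, hd⟩, rfl⟩
    rw [himg, Finset.card_image_of_injective _ (fun a b h => (Prod.mk.injEq _ _ _ _ ▸ h).1), hk]
  -- Turyn: |χ(D)|² = k − l for χ ≠ 1
  have key : ∀ χ : AddChar A ℂ, χ ≠ 1 →
      ((‖∑ d ∈ D, χ d‖ : ℝ) : ℂ) ^ 2 = (k : ℂ) - (l : ℂ) := by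
    intro χ hχ
    have habs : ((‖∑ d ∈ D, χ d‖ : ℝ) : ℂ) ^ 2
        = (∑ d ∈ D, χ d) * (starRingEnd ℂ) (∑ d ∈ D, χ d) := by
      rw [Complex.mul_conj, ← Complex.sq_norm]
      push_cast
      ring
    have hconj : (starRingEnd ℂ) (∑ d ∈ D, χ d) = ∑ e ∈ D, χ (-e) := by
      rw [map_sum]
      exact Finset.sum_congr rfl fun e _ => (AddChar.map_neg_eq_conj χ e).symm
    have hprod : (∑ d ∈ D, χ d) * (∑ e ∈ D, χ (-e))
        = ∑ p ∈ D ×ˢ D, χ (p.1 - p.2) := by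
      rw [Finset.sum_mul_sum, ← Finset.sum_product']
      exact Finset.sum_congr rfl fun p _ => by
        rw [← AddChar.map_add_eq_mul, sub_eq_add_neg]
    have hfiber : ∑ p ∈ D ×ˢ D, χ (p.1 - p.2)
        = ∑ a : A, (((D ×ˢ D).filter (fun p => p.1 - p.2 = a)).card : ℂ) * χ a := by
      rw [← Finset.sum_fiberwise_of_maps_to (g := fun p : A × A => p.1 - p.2)
        (fun p _ => Finset.mem_univ _) (fun p => χ (p.1 - p.2))]
      refine Finset.sum_congr rfl fun a _ => ?_
      rw [Finset.sum_congr rfl (fun p hp => by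
        rw [(Finset.mem_filter.1 hp).2]), Finset.sum_const, nsmul_eq_mul]
    have hchisum : ∑ a : A, χ a = 0 := by
      rw [AddChar.sum_eq_ite]
      simp [← AddChar.one_eq_zero, hχ]
    rw [habs, hconj, hprod, hfiber,
      ← Finset.add_sum_erase _ _ (Finset.mem_univ (0 : A)), hc0]
    have hrest : ∑ a ∈ Finset.univ.erase (0 : A),
        (((D ×ˢ D).filter (fun p => p.1 - p.2 = a)).card : ℂ) * χ a
        = (l : ℂ) * ∑ a ∈ Finset.univ.erase (0 : A), χ a := by
      rw [Finset.mul_sum]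
      exact Finset.sum_congr rfl fun a ha => by
        rw [hD a (Finset.mem_erase.1 ha).1]
    have herase : ∑ a ∈ Finset.univ.erase (0 : A), χ a = -1 := by
      have := Finset.add_sum_erase Finset.univ (fun a => χ a) (Finset.mem_univ (0 : A))
      simp only [AddChar.map_zero_eq_one, hchisum] at this
      linear_combination this
    rw [hrest, herase]
    simp
    ring
  -- rewrite the character sum
  have hsum : ∑ χ ∈ Finset.univ.filter (fun χ : AddChar A ℂ => χ ≠ 1),
      χ s * ((‖∑ d ∈ D, χ d‖ : ℝ) : ℂ) ^ 2 * (starRingEnd ℂ) (χ g)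
      = ((k : ℂ) - (l : ℂ)) * ((if g = s then (v : ℂ) else 0) - 1) := by
    have step1 : ∀ χ ∈ Finset.univ.filter (fun χ : AddChar A ℂ => χ ≠ 1),
        χ s * ((‖∑ d ∈ D, χ d‖ : ℝ) : ℂ) ^ 2 * (starRingEnd ℂ) (χ g)
        = ((k : ℂ) - (l : ℂ)) * χ (s - g) := by
      intro χ hχ
      rw [key χ (Finset.mem_filter.1 hχ).2, ← AddChar.map_neg_eq_conj,
        sub_eq_add_neg s g, AddChar.map_add_eq_mul]
      ring
    rw [Finset.sum_congr rfl step1, ← Finset.mul_sum, Finset.filter_ne']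
    congr 1
    have := Finset.add_sum_erase Finset.univ (fun χ : AddChar A ℂ => χ (s - g))
      (Finset.mem_univ (1 : AddChar A ℂ))
    rw [AddChar.sum_apply_eq_ite, hv] at this
    simp only [AddChar.one_apply] at this
    by_cases hgs : g = s
    · simp only [hgs, sub_self, if_pos rfl] at this ⊢
      linear_combination this
    · have hne : s - g ≠ 0 := fun h => hgs (sub_eq_zero.1 h).symm
      simp only [if_neg hne, if_neg hgs] at this ⊢
      linear_combination this
  rw [hsum, ← hr2]
  by_cases hgs : g = s
  · simp only [hgs, if_pos rfl, if_true]
    field_simp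
    ring
  · simp only [if_neg hgs]
    field_simp
    ring
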